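/- Let $n(d,\kappa)$ be the number of quadrature points used by the trapezoidal Smolyak algorithm, satisfying $n(1,\kappa) = 2^\kappa$ and for $d \geq 2$, $n(d,\kappa) = 2 n(d-1, \kappa-1) + \sum_{s=2}^{\kappa-d+1} 2^{s-1} n(d-1, \kappa-s)$ for $\kappa \geq d$. Then for all $d \geq 2$ and $\kappa \geq d$: $2^{\kappa-d+1} \leq n(d,\kappa) \leq 2^{\kappa-d+1} e^{d/2-1} \frac{\kappa^{d-1}}{(d-1)!}$. -/

import Mathlib

lemma aux_pow_succ (s k : ℕ) : s^(k+1) + (k+1)*s^k ≤ (s+1)^(k+1) := by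
  induction k with
  | zero => simp
  | succ k ih =>
    have expand : (s+1)*(s^(k+1)+(k+1)*s^k) = s^(k+1+1) + (k+1+1)*s^(k+1) + (k+1)*s^k := by
      ring
    have step2 : (s+1)*(s^(k+1)+(k+1)*s^k) ≤ (s+1)*(s+1)^(k+1) := Nat.mul_le_mul_left _ ih
    have step3 : (s+1)*(s+1)^(k+1) = (s+1)^(k+1+1) := by ring
    linarith [expand, step2, step3, Nat.zero_le ((k+1)*s^k)]

lemma aux_sum_pow (k K : ℕ) : (k+1) * ∑ s ∈ Finset.range K, s^k ≤ K^(k+1) := by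
  induction K with
  | zero => simp
  | succ K ih =>
    rw [Finset.sum_range_succ, Nat.mul_add]
    calc (k+1) * ∑ s ∈ Finset.range K, s^k + (k+1) * K^k
        ≤ K^(k+1) + (k+1)*K^k := by omega
      _ ≤ (K+1)^(k+1) := aux_pow_succ K k

lemma aux_nat_sum (d κ : ℕ) (hd : 1 ≤ d) (hκ : d + 1 ≤ κ) :
    d * ((∑ s ∈ Finset.Icc 2 (κ - d), (κ - s)^(d-1)) + (κ-1)^(d-1)) ≤ κ^d := by
  have hre : ∑ s ∈ Finset.Icc 2 (κ-d), (κ-s)^(d-1) = ∑ t ∈ Finset.Icc d (κ-2), t^(d-1) := by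
    refine Finset.sum_nbij' (fun s => κ - s) (fun t => κ - t) ?_ ?_ ?_ ?_ ?_ <;>
      intro a ha <;> simp_all [Finset.mem_Icc] <;> omega
  have hnotmem : κ - 1 ∉ Finset.Icc d (κ-2) := by
    simp only [Finset.mem_Icc]; omega
  have hins : (∑ t ∈ Finset.Icc d (κ-2), t^(d-1)) + (κ-1)^(d-1)
      = ∑ t ∈ insert (κ-1) (Finset.Icc d (κ-2)), t^(d-1) := by
    rw [Finset.sum_insert hnotmem]; ring
  have hsub : insert (κ-1) (Finset.Icc d (κ-2)) ⊆ Finset.range κ := by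
    intro t ht
    simp only [Finset.mem_insert, Finset.mem_Icc] at ht
    simp only [Finset.mem_range]
    omega
  have hle : ∑ t ∈ insert (κ-1) (Finset.Icc d (κ-2)), t^(d-1)
      ≤ ∑ t ∈ Finset.range κ, t^(d-1) :=
    Finset.sum_le_sum_of_subset hsub
  have hfin := aux_sum_pow (d-1) κ
  rw [show d - 1 + 1 = d from by omega] at hfin
  calc d * ((∑ s ∈ Finset.Icc 2 (κ - d), (κ - s)^(d-1)) + (κ-1)^(d-1))
      = d * ((∑ t ∈ Finset.Icc d (κ-2), t^(d-1)) + (κ-1)^(d-1)) := by rw [hre]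
    _ = d * ∑ t ∈ insert (κ-1) (Finset.Icc d (κ-2)), t^(d-1) := by rw [hins]
    _ ≤ d * ∑ t ∈ Finset.range κ, t^(d-1) := Nat.mul_le_mul_left _ hle
    _ ≤ κ^d := hfin
lemma aux_C : Real.exp (-(1/2 : ℝ)) ≤ Real.exp (1/2 : ℝ) - 1 := by
  have hy : Real.exp (1/2 : ℝ) * Real.exp (1/2 : ℝ) = Real.exp 1 := by
    rw [← Real.exp_add]; norm_num
  have h1 := Real.exp_one_gt_d9
  have h2 := Real.exp_one_lt_d9
  have hpos := Real.exp_pos (1/2 : ℝ)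
  have hneg : Real.exp (-(1/2:ℝ)) = 1 / Real.exp (1/2:ℝ) := by
    rw [Real.exp_neg]; ring
  rw [hneg, div_le_iff₀ hpos]
  nlinarith [sq_nonneg (Real.exp (1/2:ℝ) - 1.6488)]

-- key inequality: for 2 ≤ d ≤ κ, (d-1)(κ-1)^{d-2} ≤ (√e - 1) κ^{d-1}
lemma aux_key (d κ : ℕ) (hd : 2 ≤ d) (hκ : d ≤ κ) :
    ((d:ℝ) - 1) * ((κ:ℝ) - 1)^(d-2) ≤ (Real.exp (1/2) - 1) * (κ:ℝ)^(d-1) := by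
  obtain ⟨k, rfl⟩ : ∃ k, d = k + 2 := ⟨d - 2, by omega⟩
  have hK : (2:ℝ) ≤ (κ:ℝ) := by exact_mod_cast (le_trans hd hκ)
  have hKpos : (0:ℝ) < κ := by linarith
  set K : ℝ := (κ:ℝ) with hKdef
  set t : ℝ := ((k:ℝ) + 1) / K with htdef
  have htpos : 0 < t := by positivity
  -- t e^{-t} ≤ e^{-1}
  have hte : t * Real.exp (-t) ≤ Real.exp (-1) := by
    have h := Real.add_one_le_exp (t - 1)
    have : t * Real.exp (-t) ≤ Real.exp (t - 1) * Real.exp (-t) := by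
      apply mul_le_mul_of_nonneg_right (by linarith) (Real.exp_pos _).le
    calc t * Real.exp (-t) ≤ Real.exp (t - 1) * Real.exp (-t) := this
      _ = Real.exp (-1) := by rw [← Real.exp_add]; ring_nf
  -- (κ-1) ≤ K e^{-1/K}
  have hbase : K - 1 ≤ K * Real.exp (-(1/K)) := by
    have h := Real.add_one_le_exp (-(1/K))
    have := mul_le_mul_of_nonneg_left h (le_of_lt hKpos)
    calc K - 1 = K * (-(1/K) + 1) := by field_simp; ring
      _ ≤ K * Real.exp (-(1/K)) := this
  have hbnn : (0:ℝ) ≤ K - 1 := by linarith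
  have hpow : (K - 1)^k ≤ (K * Real.exp (-(1/K)))^k := pow_le_pow_left₀ hbnn hbase k
  have hexp_pow : (K * Real.exp (-(1/K)))^k = K^k * Real.exp (-(k:ℝ)/K) := by
    rw [mul_pow, ← Real.exp_nat_mul]
    congr 2
    field_simp
  -- main chain
  have hmain : ((k:ℝ)+1) * Real.exp (-(k:ℝ)/K) ≤ K * Real.exp (-(1/2)) := by
    have hsplit : Real.exp (-(k:ℝ)/K) = Real.exp (-t) * Real.exp (1/K) := by
      rw [← Real.exp_add, htdef]
      congr 1
      field_simp; ring
    have hkt : ((k:ℝ)+1) = K * t := by rw [htdef]; field_simp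
    have h12 : Real.exp (1/K) ≤ Real.exp (1/2) := by
      apply Real.exp_le_exp.2
      rw [div_le_div_iff₀ hKpos (by norm_num)]
      linarith
    calc ((k:ℝ)+1) * Real.exp (-(k:ℝ)/K)
        = K * (t * Real.exp (-t)) * Real.exp (1/K) := by rw [hsplit, hkt]; ring
      _ ≤ K * Real.exp (-1) * Real.exp (1/2) := by
          apply mul_le_mul (mul_le_mul_of_nonneg_left hte (by linarith)) h12
            (Real.exp_pos _).le
          positivity
      _ = K * Real.exp (-(1/2)) := by rw [mul_assoc, ← Real.exp_add]; norm_num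
  have hKk : (0:ℝ) ≤ K^k := by positivity
  have hC := aux_C
  have hcast1 : ((k+2:ℕ):ℝ) - 1 = (k:ℝ) + 1 := by push_cast; ring
  have hsub2 : k + 2 - 2 = k := by omega
  have hsub1 : k + 2 - 1 = k + 1 := by omega
  rw [hcast1, hsub2, hsub1]
  calc ((k:ℝ)+1) * (K-1)^k ≤ ((k:ℝ)+1) * (K^k * Real.exp (-(k:ℝ)/K)) := by
        apply mul_le_mul_of_nonneg_left (hpow.trans_eq hexp_pow) (by positivity)
    _ = K^k * (((k:ℝ)+1) * Real.exp (-(k:ℝ)/K)) := by ring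
    _ ≤ K^k * (K * Real.exp (-(1/2))) := mul_le_mul_of_nonneg_left hmain hKk
    _ ≤ K^k * (K * (Real.exp (1/2) - 1)) := by
        apply mul_le_mul_of_nonneg_left _ hKk
        apply mul_le_mul_of_nonneg_left _ (by linarith)
        exact_mod_cast hC
    _ = (Real.exp (1/2) - 1) * K^(k+1) := by ring
lemma aux_low (n : ℕ → ℕ → ℝ)
    (h1 : ∀ κ, 1 ≤ κ → n 1 κ = 2 ^ κ)
    (hrec : ∀ d κ, 2 ≤ d → d ≤ κ →
      n d κ = 2 * n (d - 1) (κ - 1) +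
        ∑ s ∈ Finset.Icc 2 (κ - d + 1), 2 ^ (s - 1) * n (d - 1) (κ - s))
    (d : ℕ) (hd : 1 ≤ d) : ∀ κ, d ≤ κ → (2:ℝ)^(κ - d + 1) ≤ n d κ := by
  induction d, hd using Nat.le_induction with
  | base =>
    intro κ hκ
    rw [h1 κ hκ]
    have : κ - 1 + 1 = κ := by omega
    rw [this]
  | succ d hd ih =>
    intro κ hκ
    rw [hrec (d+1) κ (by omega) hκ]
    simp only [Nat.add_sub_cancel]
    have e1 : (κ-1) - d + 1 = κ - d := by omega
    have hterm : (2:ℝ)^(κ - d) ≤ n d (κ-1) := by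
      have := ih (κ-1) (by omega)
      rwa [e1] at this
    have hsum : (0:ℝ) ≤ ∑ s ∈ Finset.Icc 2 (κ - (d+1) + 1), 2 ^ (s - 1) * n d (κ - s) := by
      apply Finset.sum_nonneg
      intro s hs
      rw [Finset.mem_Icc] at hs
      have hle : d ≤ κ - s := by omega
      have := ih (κ - s) hle
      have h2 : (0:ℝ) < 2 ^ ((κ - s) - d + 1) := by positivity
      have hn : (0:ℝ) ≤ n d (κ - s) := by linarith
      positivity
    have e2 : κ - (d+1) + 1 = κ - d := by omega
    rw [e2] at hsum ⊢
    have h2 : (0:ℝ) < 2 ^ (κ - d) := by positivity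
    linarith
lemma aux_up (n : ℕ → ℕ → ℝ)
    (h1 : ∀ κ, 1 ≤ κ → n 1 κ = 2 ^ κ)
    (hrec : ∀ d κ, 2 ≤ d → d ≤ κ →
      n d κ = 2 * n (d - 1) (κ - 1) +
        ∑ s ∈ Finset.Icc 2 (κ - d + 1), 2 ^ (s - 1) * n (d - 1) (κ - s))
    (d : ℕ) (hd : 2 ≤ d) : ∀ κ, d ≤ κ →
      n d κ ≤ 2 ^ (κ - d + 1) * Real.exp ((d : ℝ) / 2 - 1) *
        (κ : ℝ) ^ (d - 1) / (d - 1).factorial := by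
  induction d, hd using Nat.le_induction with
  | base =>
    intro κ hκ
    rw [hrec 2 κ le_rfl hκ]
    norm_num
    rw [h1 (κ-1) (by omega)]
    have hsum : ∑ s ∈ Finset.Icc 2 (κ - 2 + 1), (2:ℝ) ^ (s - 1) * n 1 (κ - s)
        = ∑ s ∈ Finset.Icc 2 (κ - 1), (2:ℝ) ^ (κ - 1) := by
      rw [show κ - 2 + 1 = κ - 1 from by omega]
      apply Finset.sum_congr rfl
      intro s hs
      rw [Finset.mem_Icc] at hs
      rw [h1 (κ-s) (by omega), ← pow_add]
      congr 1
      omega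
    rw [hsum, Finset.sum_const, Nat.card_Icc, nsmul_eq_mul,
      show κ - 1 + 1 - 2 = κ - 2 from by omega,
      show κ - 2 + 1 = κ - 1 from by omega]
    have hcast : ((κ - 2 : ℕ) : ℝ) = (κ:ℝ) - 2 := by
      push_cast [Nat.cast_sub (by omega : 2 ≤ κ)]; ring
    rw [hcast]
    have hp : (0:ℝ) < 2 ^ (κ - 1) := by positivity
    have hκ2 : (2:ℝ) ≤ (κ:ℝ) := by exact_mod_cast hκ
    nlinarith [hp]
  | succ d hd ih =>
    intro κ hκ
    rw [hrec (d+1) κ (by omega) hκ]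
    simp only [Nat.add_sub_cancel]
    rw [show κ - (d+1) + 1 = κ - d from by omega]
    set E := Real.exp ((d:ℝ)/2 - 1) with hE
    have hEpos : (0:ℝ) < E := Real.exp_pos _
    have hF : (0:ℝ) < ((d-1).factorial : ℝ) := by
      exact_mod_cast (d-1).factorial_pos
    set F : ℝ := ((d-1).factorial : ℝ) with hFdef
    set A : ℝ := ((κ:ℝ) - 1)^(d-1) with hA
    have hcastk : ((κ - 1 : ℕ) : ℝ) = (κ:ℝ) - 1 := by
      push_cast [Nat.cast_sub (by omega : 1 ≤ κ)]; ring
    have hApos : (0:ℝ) ≤ A := by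
      rw [hA]; apply pow_nonneg; rw [← hcastk]; positivity
    -- first term
    have hterm : n d (κ-1) ≤ 2^(κ-d) * E * A / F := by
      have h := ih (κ-1) (by omega)
      rwa [show (κ-1) - d + 1 = κ - d from by omega, hcastk] at h
    -- sum bound
    set T : ℕ := ∑ s ∈ Finset.Icc 2 (κ-d), (κ-s)^(d-1) with hT
    have hsum : ∑ s ∈ Finset.Icc 2 (κ-d), (2:ℝ)^(s-1) * n d (κ-s)
        ≤ 2^(κ-d) * E * (T:ℝ) / F := by
      have h1' : ∑ s ∈ Finset.Icc 2 (κ-d), (2:ℝ)^(s-1) * n d (κ-s)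
          ≤ ∑ s ∈ Finset.Icc 2 (κ-d), 2^(κ-d) * E * (((κ-s:ℕ)):ℝ)^(d-1) / F := by
        apply Finset.sum_le_sum
        intro s hs
        rw [Finset.mem_Icc] at hs
        have hle : d ≤ κ - s := by omega
        have hbound := ih (κ-s) hle
        have hpow2 : (2:ℝ)^(s-1) * 2^((κ-s) - d + 1) = 2^(κ-d) := by
          rw [← pow_add]; congr 1; omega
        calc (2:ℝ)^(s-1) * n d (κ-s)
            ≤ (2:ℝ)^(s-1) * (2^((κ-s) - d + 1) * E * (((κ-s:ℕ)):ℝ)^(d-1) / F) :=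
              mul_le_mul_of_nonneg_left hbound (by positivity)
          _ = 2^(κ-d) * E * (((κ-s:ℕ)):ℝ)^(d-1) / F := by rw [← hpow2]; ring
      have h2' : ∑ s ∈ Finset.Icc 2 (κ-d), 2^(κ-d) * E * (((κ-s:ℕ)):ℝ)^(d-1) / F
          = 2^(κ-d) * E * (T:ℝ) / F := by
        rw [hT]
        push_cast
        rw [← Finset.sum_div, ← Finset.mul_sum]
      linarith [h1', h2'.le, h2'.ge]
    -- nat inequality, cast
    have hnat := aux_nat_sum d κ (by omega) hκ
    have hdpos : (0:ℝ) < (d:ℝ) := by positivity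
    have hnatR : (T:ℝ) + A ≤ (κ:ℝ)^d / d := by
      rw [le_div_iff₀ hdpos]
      have : ((d * (T + (κ-1)^(d-1)) : ℕ) : ℝ) ≤ ((κ^d : ℕ) : ℝ) := by exact_mod_cast hnat
      push_cast at this
      rw [hcastk] at this
      rw [hA]
      linarith
    -- key inequality
    have hkey : (d:ℝ) * A ≤ (Real.exp (1/2) - 1) * (κ:ℝ)^d := by
      have h := aux_key (d+1) κ (by omega) (by omega)
      rw [show d + 1 - 2 = d - 1 from by omega, show d + 1 - 1 = d from by omega] at h
      push_cast at h
      rw [hA]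
      linarith
    -- combine: 2A + T ≤ exp(1/2) κ^d / d
    have hcomb : 2*A + (T:ℝ) ≤ Real.exp (1/2) * (κ:ℝ)^d / (d:ℝ) := by
      have h1'' : A ≤ (Real.exp (1/2) - 1) * (κ:ℝ)^d / d := by
        rw [le_div_iff₀ hdpos]; linarith
      have : 2*A + (T:ℝ) = A + ((T:ℝ) + A) := by ring
      rw [this]
      calc A + ((T:ℝ) + A) ≤ (Real.exp (1/2) - 1) * (κ:ℝ)^d / d + (κ:ℝ)^d / d := by
            linarith [hnatR]
        _ = Real.exp (1/2) * (κ:ℝ)^d / (d:ℝ) := by ring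
    -- final
    have hfact : ((d.factorial : ℕ) : ℝ) = (d:ℝ) * F := by
      rw [hFdef, ← Nat.cast_mul, Nat.mul_factorial_pred (by omega : d ≠ 0)]
    have hexp : Real.exp (((d+1:ℕ):ℝ)/2 - 1) = E * Real.exp (1/2) := by
      rw [hE, ← Real.exp_add]
      congr 1
      push_cast
      ring
    have hRHS : 2^(κ-d) * Real.exp (((d+1:ℕ):ℝ)/2 - 1) * (κ:ℝ)^d / (d.factorial : ℝ)
        = 2^(κ-d) * E * (Real.exp (1/2) * (κ:ℝ)^d / (d:ℝ)) / F := by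
      rw [hfact, hexp]
      field_simp
    rw [hRHS]
    have hmono : 2^(κ-d) * E * (2*A + (T:ℝ)) / F ≤ 2^(κ-d) * E * (Real.exp (1/2) * (κ:ℝ)^d / (d:ℝ)) / F := by
      gcongr
    have hsplit : 2^(κ-d) * E * (2*A + (T:ℝ)) / F = 2*(2^(κ-d) * E * A / F) + 2^(κ-d) * E * (T:ℝ) / F := by
      ring
    linarith [hterm, hsum, hmono, hsplit.le, hsplit.ge]

/-- Bounds on the number `n(d,κ)` of points of the trapezoidal-Smolyak rule:
given `n(1,κ) = 2^κ` and, for `d ≥ 2` and `κ ≥ d`,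
`n(d,κ) = 2 n(d-1,κ-1) + ∑_{s=2}^{κ-d+1} 2^{s-1} n(d-1,κ-s)`, one has
`2^{κ-d+1} ≤ n(d,κ) ≤ 2^{κ-d+1} e^{d/2-1} κ^{d-1}/(d-1)!` for all `d ≥ 2`, `κ ≥ d`. -/
theorem stmt_5 (n : ℕ → ℕ → ℝ)
    (h1 : ∀ κ, 1 ≤ κ → n 1 κ = 2 ^ κ)
    (hrec : ∀ d κ, 2 ≤ d → d ≤ κ →
      n d κ = 2 * n (d - 1) (κ - 1) +
        ∑ s ∈ Finset.Icc 2 (κ - d + 1), 2 ^ (s - 1) * n (d - 1) (κ - s))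
    (d κ : ℕ) (hd : 2 ≤ d) (hκ : d ≤ κ) :
    (2 : ℝ) ^ (κ - d + 1) ≤ n d κ ∧
      n d κ ≤ 2 ^ (κ - d + 1) * Real.exp ((d : ℝ) / 2 - 1) *
        (κ : ℝ) ^ (d - 1) / (d - 1).factorial := by
  exact ⟨aux_low n h1 hrec d (by omega) κ hκ, aux_up n h1 hrec d hd κ hκ⟩
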